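/- Let G be a finite simple graph of order n and size m with minimum degree δ and degree sequence d₁ ≤ d₂ ≤ ⋯ ≤ d_n, and let 1 ≤ k ≤ n be a positive integer. Then γ^NN_{ks}(G) ≥ (nδ − 4m − n + 2 ∑_{i=1}^{k} ⌈(d_i + 1)/2⌉)/(δ + 1). -/

import Mathlib

open Finset

/-- The closed neighborhood of `v` in `G`, as a `Finset`. -/
def closedNbr {V : Type*} [Fintype V] [DecidableEq V] (G : SimpleGraph V) [DecidableRel G.Adj]
    (v : V) : Finset V := insert v (G.neighborFinset v)

/-- `f` is a nonnegative signed `k`-subdominating function of `G`: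
`f : V → {-1, 1}` and `∑_{u ∈ N[v]} f(u) ≥ 0` for at least `k` vertices `v`. -/
def IsNNSkSDF {V : Type*} [Fintype V] [DecidableEq V] (G : SimpleGraph V) [DecidableRel G.Adj]
    (k : ℕ) (f : V → ℤ) : Prop :=
  (∀ v, f v = 1 ∨ f v = -1) ∧
    k ≤ (univ.filter fun v => 0 ≤ ∑ u ∈ closedNbr G v, f u).card

/-- The nonnegative signed `k`-subdomination number `γ^NN_{ks}(G)`. -/
noncomputable def gammaNNks {V : Type*} [Fintype V] [DecidableEq V] (G : SimpleGraph V)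
    [DecidableRel G.Adj] (k : ℕ) : ℤ :=
  sInf {w : ℤ | ∃ f : V → ℤ, IsNNSkSDF G k f ∧ w = ∑ v, f v}


lemma take_sum_le_sublist_sum : ∀ {l L : List ℕ}, List.Sublist l L → L.Pairwise (· ≤ ·) →
    (L.take l.length).sum ≤ l.sum := by
  intro l L h
  induction h with
  | slnil => simp
  | @cons l L a h ih =>
    intro hs
    rcases Nat.eq_zero_or_pos l.length with h0 | h0
    · simp [h0]
    have hlen : l.length ≤ L.length := h.length_le
    obtain ⟨p, hp⟩ : ∃ p, l.length = p + 1 := ⟨l.length - 1, by omega⟩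
    have hpL : p < L.length := by omega
    have htake : (a :: L).take l.length = a :: L.take p := by rw [hp]; rfl
    have htake2 : L.take (p+1) = L.take p ++ [L[p]'hpL] := by
      rw [List.take_succ]
      simp [List.getElem?_eq_getElem hpL]
    have hsum : (L.take (p+1)).sum = (L.take p).sum + L[p]'hpL := by
      rw [htake2, List.sum_append]; simp
    have haL : a ≤ L[p]'hpL :=
      List.rel_of_pairwise_cons hs (List.getElem_mem _)
    have key := ih hs.of_cons
    rw [hp] at key
    rw [htake]
    simp only [List.sum_cons]
    omega
  | @cons_cons l L a h ih =>
    intro hs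
    have := ih hs.of_cons
    simpa using Nat.add_le_add_left this a

lemma sum_k_smallest_le {V : Type*} [Fintype V] [DecidableEq V] (G : SimpleGraph V)
    [DecidableRel G.Adj] (n k : ℕ) (d : ℕ → ℕ) (g : ℕ → ℕ) (hg : Monotone g)
    (hmono : ∀ i j, i ≤ j → j < n → d i ≤ d j)
    (hseq : (univ : Finset V).val.map (fun v => G.degree v) = (Finset.range n).val.map d)
    (S : Finset V) (hk : k ≤ S.card) :
    ∑ i ∈ Finset.range k, g (d i) ≤ ∑ v ∈ S, g (G.degree v) := by
  have hkn : k ≤ n := by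
    have h1 : S.card ≤ Fintype.card V := Finset.card_le_univ S
    have h2 : Fintype.card V = n := by
      have := congrArg Multiset.card hseq
      simpa using this
    omega
  obtain ⟨S', hS'sub, hS'card⟩ := Finset.exists_subset_card_eq hk
  have hstep : ∑ v ∈ S', g (G.degree v) ≤ ∑ v ∈ S, g (G.degree v) :=
    Finset.sum_le_sum_of_subset hS'sub
  refine le_trans ?_ hstep
  -- the sorted list of all g-degree values
  set L : List ℕ := (List.range n).map (fun i => g (d i)) with hL
  have hLsorted : L.Pairwise (· ≤ ·) := by
    rw [hL, List.pairwise_map]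
    refine List.Pairwise.imp_of_mem ?_ (List.pairwise_lt_range (n := n))
    intro a b ha hb hab
    exact hg (hmono a b hab.le (List.mem_range.mp hb))
  -- the multiset of values on S' is below ↑L
  have hT : (S'.val.map (fun v => g (G.degree v))) ≤ (↑L : Multiset ℕ) := by
    have h1 : S'.val ≤ (univ : Finset V).val := Finset.val_le_iff.mpr (Finset.subset_univ S')
    calc S'.val.map (fun v => g (G.degree v))
        = (S'.val.map (fun v => G.degree v)).map g := by rw [Multiset.map_map]; rfl
      _ ≤ ((univ : Finset V).val.map (fun v => G.degree v)).map g :=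
          Multiset.map_le_map (Multiset.map_le_map h1)
      _ = ((Finset.range n).val.map d).map g := by rw [hseq]
      _ = (↑L : Multiset ℕ) := by
          rw [Multiset.map_map, hL]
          simp [Finset.range, Multiset.range]
          exact List.Perm.refl _
  set T : Multiset ℕ := S'.val.map (fun v => g (G.degree v)) with hTdef
  have hT2 : (↑T.toList : Multiset ℕ) ≤ (↑L : Multiset ℕ) := by rw [Multiset.coe_toList]; exact hT
  rw [Multiset.coe_le] at hT2
  obtain ⟨l', hperm, hsub⟩ := hT2
  have hlen : l'.length = k := by
    have h1 : l'.length = T.toList.length := hperm.length_eq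
    have h2 : T.toList.length = Multiset.card T := by
      rw [← Multiset.coe_card, Multiset.coe_toList]
    rw [h1, h2, hTdef]
    simpa using hS'card
  have hmain := take_sum_le_sublist_sum hsub hLsorted
  rw [hlen] at hmain
  have htakeL : (L.take k).sum = ∑ i ∈ Finset.range k, g (d i) := by
    rw [hL, ← List.map_take, List.take_range, min_eq_left hkn]
    simp [Finset.sum, Multiset.range]
  have hsum' : l'.sum = ∑ v ∈ S', g (G.degree v) := by
    rw [hperm.sum_eq]
    have : T.toList.sum = T.sum := by
      rw [← Multiset.sum_coe, Multiset.coe_toList]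
    rw [this, hTdef]
    rfl
  rw [← hsum', ← htakeL]
  exact hmain


lemma ceil_half_eq (x : ℕ) : (⌈((x : ℚ) + 1) / 2⌉ : ℤ) = ((x + 2) / 2 : ℕ) := by
  rcases Nat.even_or_odd x with ⟨t, ht⟩ | ⟨t, ht⟩
  · subst ht
    have h2 : ((t + t + 2) / 2 : ℕ) = t + 1 := by omega
    rw [h2, Int.ceil_eq_iff]
    push_cast
    constructor <;> linarith
  · subst ht
    have h2 : ((2 * t + 1 + 2) / 2 : ℕ) = t + 1 := by omega
    rw [h2, Int.ceil_eq_iff]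
    push_cast
    constructor <;> linarith

lemma key_ineq {V : Type*} [Fintype V] [DecidableEq V]
    (G : SimpleGraph V) [DecidableRel G.Adj]
    (n m k δ : ℕ) (hn : n = Fintype.card V) (hm : m = G.edgeFinset.card)
    (hδ : δ = G.minDegree)
    (d : ℕ → ℕ) (hmono : ∀ i j, i ≤ j → j < n → d i ≤ d j)
    (hseq : (univ : Finset V).val.map (fun v => G.degree v) = (Finset.range n).val.map d)
    (f : V → ℤ) (hf : IsNNSkSDF G k f) :
    (n * δ : ℤ) + 2 * ∑ i ∈ Finset.range k, (((d i + 2) / 2 : ℕ) : ℤ)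
      ≤ (δ + 1) * ∑ v, f v + 4 * m + n := by
  obtain ⟨hf1, hfk⟩ := hf
  classical
  set A : Finset V := univ.filter (fun v => 0 ≤ ∑ u ∈ closedNbr G v, f u) with hA
  set P : Finset V := univ.filter (fun v => f v = 1) with hP
  set M : Finset V := univ.filter (fun v => f v = -1) with hM
  -- basic facts about filters
  have hnotone : ∀ (s : Finset V), s.filter (fun v => ¬ f v = 1) = s.filter (fun v => f v = -1) := by
    intro s
    apply Finset.filter_congr
    intro v _
    rcases hf1 v with h | h <;> simp [h]
  have hcard_split : ∀ (s : Finset V),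
      (s.filter (fun v => f v = 1)).card + (s.filter (fun v => f v = -1)).card = s.card := by
    intro s
    rw [← hnotone s]
    exact Finset.card_filter_add_card_filter_not _
  have hsum_split : ∀ (s : Finset V),
      ∑ u ∈ s, f u = ((s.filter (fun v => f v = 1)).card : ℤ)
        - ((s.filter (fun v => f v = -1)).card : ℤ) := by
    intro s
    have h1 : ∑ u ∈ s.filter (fun v => f v = 1), f u
        = ((s.filter (fun v => f v = 1)).card : ℤ) := by
      rw [Finset.sum_congr rfl (fun v hv => (Finset.mem_filter.mp hv).2)]
      rw [Finset.sum_const, nsmul_eq_mul, mul_one]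
    have h2 : ∑ u ∈ s.filter (fun v => f v = -1), f u
        = -((s.filter (fun v => f v = -1)).card : ℤ) := by
      rw [Finset.sum_congr rfl (fun v hv => (Finset.mem_filter.mp hv).2)]
      rw [Finset.sum_const, nsmul_eq_mul, mul_neg_one]
    rw [← Finset.sum_filter_add_sum_filter_not s (fun v => f v = 1), hnotone s, h1, h2]
    ring
  have hcardN : ∀ v : V, (closedNbr G v).card = G.degree v + 1 := by
    intro v
    rw [closedNbr, Finset.card_insert_of_notMem (SimpleGraph.notMem_neighborFinset_self G v)]
    rfl
  -- step 2 : good vertices have many positive neighbors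
  have step2 : ∀ v ∈ A, ((G.degree v + 2) / 2 : ℕ)
      ≤ ((closedNbr G v).filter (fun u => f u = 1)).card := by
    intro v hv
    have h0 : 0 ≤ ∑ u ∈ closedNbr G v, f u := (Finset.mem_filter.mp hv).2
    rw [hsum_split] at h0
    have h1 := hcard_split (closedNbr G v)
    rw [hcardN v] at h1
    omega
  -- membership symmetry for closed neighborhoods
  have hmemsym : ∀ u v : V, u ∈ closedNbr G v ↔ v ∈ closedNbr G u := by
    intro u v
    simp only [closedNbr, Finset.mem_insert, SimpleGraph.mem_neighborFinset]
    constructor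
    · rintro (h | h)
      · exact Or.inl h.symm
      · exact Or.inr h.symm
    · rintro (h | h)
      · exact Or.inl h.symm
      · exact Or.inr h.symm
  -- step 3 : double counting
  have step3 : ∑ v ∈ A, ((closedNbr G v).filter (fun u => f u = 1)).card
      ≤ ∑ u ∈ P, (G.degree u + 1) := by
    have e1 : ∀ v : V, ((closedNbr G v).filter (fun u => f u = 1)).card
        = (P.filter (fun u => u ∈ closedNbr G v)).card := by
      intro v
      congr 1
      ext u
      simp only [Finset.mem_filter, hP, Finset.mem_univ, true_and]
      tauto
    calc ∑ v ∈ A, ((closedNbr G v).filter (fun u => f u = 1)).card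
        = ∑ v ∈ A, ∑ u ∈ P, if u ∈ closedNbr G v then 1 else 0 := by
          refine Finset.sum_congr rfl fun v _ => ?_
          rw [e1 v, Finset.card_filter]
      _ = ∑ u ∈ P, ∑ v ∈ A, if u ∈ closedNbr G v then 1 else 0 := Finset.sum_comm
      _ = ∑ u ∈ P, ∑ v ∈ A, if v ∈ closedNbr G u then 1 else 0 := by
          refine Finset.sum_congr rfl fun u _ => Finset.sum_congr rfl fun v _ => ?_
          rw [if_congr (hmemsym u v) rfl rfl]
      _ = ∑ u ∈ P, (A.filter (fun v => v ∈ closedNbr G u)).card := by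
          refine Finset.sum_congr rfl fun u _ => ?_
          rw [Finset.card_filter]
      _ ≤ ∑ u ∈ P, (closedNbr G u).card :=
          Finset.sum_le_sum fun u _ =>
            Finset.card_le_card fun x hx => (Finset.mem_filter.mp hx).2
      _ = ∑ u ∈ P, (G.degree u + 1) := Finset.sum_congr rfl fun u _ => hcardN u
  -- combining with the k smallest degrees
  have hgmono : Monotone (fun x : ℕ => (x + 2) / 2) := fun a b hab =>
    Nat.div_le_div_right (by omega)
  have stepC := sum_k_smallest_le G n k d (fun x => (x + 2) / 2) hgmono hmono hseq A hfk
  have chain : ∑ i ∈ Finset.range k, (d i + 2) / 2 ≤ ∑ u ∈ P, (G.degree u + 1) :=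
    le_trans stepC (le_trans (Finset.sum_le_sum step2) step3)
  -- minimum degree bound on M
  have stepM : M.card * (δ + 1) ≤ ∑ u ∈ M, (G.degree u + 1) := by
    calc M.card * (δ + 1) = ∑ _u ∈ M, (δ + 1) := by rw [Finset.sum_const, smul_eq_mul]
      _ ≤ ∑ u ∈ M, (G.degree u + 1) := Finset.sum_le_sum fun u _ => by
          have h := G.minDegree_le_degree u
          omega
  -- total degree sum
  have total : ∑ u ∈ P, (G.degree u + 1) + ∑ u ∈ M, (G.degree u + 1) = 2 * m + n := by
    rw [hP, hM, ← hnotone, Finset.sum_filter_add_sum_filter_not]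
    rw [Finset.sum_add_distrib, SimpleGraph.sum_degrees_eq_twice_card_edges]
    simp [hn, hm, Finset.card_univ]
  have hw : ∑ v, f v = ((P.card : ℤ) - M.card) := by
    rw [hsum_split univ, hP, hM]
  have hPMn : P.card + M.card = n := by
    rw [hP, hM]
    rw [hcard_split univ, Finset.card_univ, hn]
  -- final arithmetic
  rw [hw]
  set X : ℕ := ∑ u ∈ P, (G.degree u + 1)
  set Y : ℕ := ∑ u ∈ M, (G.degree u + 1)
  set Sk : ℕ := ∑ i ∈ Finset.range k, (d i + 2) / 2 with hSk
  have hcast : ∑ i ∈ Finset.range k, (((d i + 2) / 2 : ℕ) : ℤ) = (Sk : ℤ) := by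
    rw [hSk]; push_cast; rfl
  rw [hcast]
  have c1 : (Sk : ℤ) ≤ (X : ℤ) := by exact_mod_cast chain
  have c2 : (M.card : ℤ) * ((δ : ℤ) + 1) ≤ (Y : ℤ) := by exact_mod_cast stepM
  have c3 : (X : ℤ) + (Y : ℤ) = 2 * m + n := by exact_mod_cast total
  have c4 : (P.card : ℤ) + (M.card : ℤ) = (n : ℤ) := by exact_mod_cast hPMn
  have c5 : (P.card : ℤ) * (δ : ℤ) + (M.card : ℤ) * (δ : ℤ) = (n : ℤ) * (δ : ℤ) := by
    rw [← add_mul, c4]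
  nlinarith [c1, c2, c3, c4, c5]

theorem gammaNNks_lower_bound_2 {V : Type*} [Fintype V] [DecidableEq V]
    (G : SimpleGraph V) [DecidableRel G.Adj]
    (n m k δ : ℕ) (hn : n = Fintype.card V) (hm : m = G.edgeFinset.card)
    (hδ : δ = G.minDegree) (hk1 : 1 ≤ k) (hk2 : k ≤ n)
    (d : ℕ → ℕ) (hmono : ∀ i j, i ≤ j → j < n → d i ≤ d j)
    (hseq : (univ : Finset V).val.map (fun v => G.degree v) = (Finset.range n).val.map d) :
    ((n : ℝ) * δ - 4 * (m : ℝ) - n + 2 * ∑ i ∈ Finset.range k, (⌈((d i : ℚ) + 1) / 2⌉ : ℝ))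
        / ((δ : ℝ) + 1)
      ≤ (gammaNNks G k : ℝ) := by
  classical
  set S : Set ℤ := {w : ℤ | ∃ f : V → ℤ, IsNNSkSDF G k f ∧ w = ∑ v, f v} with hS
  have hne : S.Nonempty := by
    refine ⟨∑ v : V, (1 : ℤ), fun _ => 1, ⟨fun v => Or.inl rfl, ?_⟩, rfl⟩
    have hfil : (univ.filter fun v : V => 0 ≤ ∑ _u ∈ closedNbr G v, (1 : ℤ)) = univ := by
      refine Finset.filter_true_of_mem fun v _ => ?_
      exact Finset.sum_nonneg fun _ _ => zero_le_one
    rw [hfil, Finset.card_univ, ← hn]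
    exact hk2
  have hbdd : BddBelow S := by
    refine ⟨-(Fintype.card V : ℤ), ?_⟩
    rintro w ⟨f, ⟨hf1, -⟩, rfl⟩
    have h1 : ∑ v : V, (-1 : ℤ) ≤ ∑ v, f v :=
      Finset.sum_le_sum fun v _ => by rcases hf1 v with h | h <;> simp [h]
    simpa [Finset.card_univ] using h1
  have hmem : sInf S ∈ S := Int.csInf_mem hne hbdd
  obtain ⟨f, hf, hwf⟩ := hmem
  have key := key_ineq G n m k δ hn hm hδ d hmono hseq f hf
  have hδpos : (0 : ℝ) < (δ : ℝ) + 1 := by positivity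
  rw [div_le_iff₀ hδpos]
  have hceil : ∑ i ∈ Finset.range k, (⌈((d i : ℚ) + 1) / 2⌉ : ℝ)
      = ∑ i ∈ Finset.range k, ((((d i + 2) / 2 : ℕ) : ℤ) : ℝ) := by
    refine Finset.sum_congr rfl fun i _ => ?_
    exact_mod_cast congrArg (Int.cast : ℤ → ℝ) (ceil_half_eq (d i))
  rw [hceil]
  show _ ≤ ((gammaNNks G k : ℤ) : ℝ) * _
  have hval : gammaNNks G k = ∑ v, f v := hwf
  rw [hval]
  have keyR : (n : ℝ) * δ + 2 * ∑ i ∈ Finset.range k, ((((d i + 2) / 2 : ℕ) : ℤ) : ℝ)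
      ≤ ((δ : ℝ) + 1) * ((∑ v, f v : ℤ) : ℝ) + 4 * m + n := by
    exact_mod_cast key
  push_cast at keyR ⊢
  linarith
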